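/- Write each B_n in m×m blocks as B_n = [[A_n, C_n],[C_nᵀ, D_n]] and assume I_m + hC_nᵀ is invertible for every n. Then the nullity of the form equals the ω-nullity of the monodromy matrix: m⁰_{h,ω} = dim_ℂ ker(M − ω I_{2m}), where M = S_h(A_{N−1},C_{N−1},D_{N−1})·S_h(A_{N−2},C_{N−2},D_{N−2})⋯S_h(A_0,C_0,D_0). -/

import Mathlib

open Matrix

namespace DHS

/-- The ambient space of pairs of sequences `x, y : ℤ → ℂ^m`. -/
abbrev V (m : ℕ) := (ℤ → Fin m → ℂ) × (ℤ → Fin m → ℂ)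

/-- The standard symplectic matrix `J = [[0, -I_m],[I_m, 0]]` in `m × m` blocks. -/
def Jm (m : ℕ) : Matrix (Fin m ⊕ Fin m) (Fin m ⊕ Fin m) ℂ :=
  Matrix.fromBlocks 0 (-1) 1 0

/-- `z_n = (x_n, y_n) ∈ ℂ^{2m}`. -/
def zf {m : ℕ} (z : V m) (n : ℤ) : Fin m ⊕ Fin m → ℂ := Sum.elim (z.1 n) (z.2 n)

/-- `z̃_n = (x_{n+1}, y_n) ∈ ℂ^{2m}`. -/
def zt {m : ℕ} (z : V m) (n : ℤ) : Fin m ⊕ Fin m → ℂ := Sum.elim (z.1 (n + 1)) (z.2 n)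

/-- The standard Hermitian product `⟨u, v⟩ = Σ_i u_i · conj (v_i)` on `ℂ^{2m}`. -/
noncomputable def herm {α : Type} [Fintype α] (u v : α → ℂ) : ℂ :=
  ∑ i, u i * (starRingEnd ℂ) (v i)

/-- The space `W̃_ω` of pairs of sequences with `x_{n+N} = ω x_n`, `y_{n+N} = ω y_n`. -/
noncomputable def Wt (m N : ℕ) (ω : ℂ) : Submodule ℂ (V m) where
  carrier := {z | ∀ n : ℤ, z.1 (n + (N : ℤ)) = ω • z.1 n ∧ z.2 (n + (N : ℤ)) = ω • z.2 n}
  add_mem' := by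
    intro a b ha hb n
    refine ⟨?_, ?_⟩
    · show (a.1 + b.1) (n + (N : ℤ)) = ω • (a.1 + b.1) n
      simp [Pi.add_apply, (ha n).1, (hb n).1, smul_add]
    · show (a.2 + b.2) (n + (N : ℤ)) = ω • (a.2 + b.2) n
      simp [Pi.add_apply, (ha n).2, (hb n).2, smul_add]
  zero_mem' := by intro n; simp
  smul_mem' := by
    intro c a ha n
    refine ⟨?_, ?_⟩
    · show (c • a.1) (n + (N : ℤ)) = ω • (c • a.1) n
      simp [Pi.smul_apply, (ha n).1, smul_comm c ω]
    · show (c • a.2) (n + (N : ℤ)) = ω • (c • a.2) n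
      simp [Pi.smul_apply, (ha n).2, smul_comm c ω]

/-- The form `𝒜_{h,ω}(z̃, w̃) = Σ_{n=1}^{N} [⟨−J(z_{n+1}−z_n)/h, w̃_n⟩ − ⟨B_n z̃_n, w̃_n⟩]`. -/
noncomputable def Aform (m N : ℕ) (h : ℝ)
    (B : ℤ → Matrix (Fin m ⊕ Fin m) (Fin m ⊕ Fin m) ℝ) (z w : V m) : ℂ :=
  ∑ n ∈ Finset.Icc (1 : ℤ) (N : ℤ),
    (herm (((h : ℂ))⁻¹ • ((-(Jm m)).mulVec (zf z (n + 1) - zf z n))) (zt w n)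
      - herm (((B n).map (fun x => (x : ℂ))).mulVec (zt z n)) (zt w n))

lemma herm_add_left {α : Type} [Fintype α] (u v w : α → ℂ) :
    herm (u + v) w = herm u w + herm v w := by
  simp [herm, add_mul, Finset.sum_add_distrib]

lemma herm_smul_left {α : Type} [Fintype α] (c : ℂ) (u w : α → ℂ) :
    herm (c • u) w = c * herm u w := by
  simp [herm, Finset.mul_sum, mul_assoc]

lemma herm_zero_left {α : Type} [Fintype α] (w : α → ℂ) : herm 0 w = 0 := by
  simp [herm]

lemma zf_add {m : ℕ} (a b : V m) (n : ℤ) : zf (a + b) n = zf a n + zf b n := by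
  funext i; cases i <;> rfl

lemma zf_smul {m : ℕ} (c : ℂ) (a : V m) (n : ℤ) : zf (c • a) n = c • zf a n := by
  funext i; cases i <;> rfl

lemma zf_zero {m : ℕ} (n : ℤ) : zf (0 : V m) n = 0 := by
  funext i; cases i <;> rfl

lemma zt_add {m : ℕ} (a b : V m) (n : ℤ) : zt (a + b) n = zt a n + zt b n := by
  funext i; cases i <;> rfl

lemma zt_smul {m : ℕ} (c : ℂ) (a : V m) (n : ℤ) : zt (c • a) n = c • zt a n := by
  funext i; cases i <;> rfl

lemma zt_zero {m : ℕ} (n : ℤ) : zt (0 : V m) n = 0 := by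
  funext i; cases i <;> rfl

lemma Aform_add_left (m N : ℕ) (h : ℝ)
    (B : ℤ → Matrix (Fin m ⊕ Fin m) (Fin m ⊕ Fin m) ℝ) (a b w : V m) :
    Aform m N h B (a + b) w = Aform m N h B a w + Aform m N h B b w := by
  unfold Aform
  rw [← Finset.sum_add_distrib]
  refine Finset.sum_congr rfl fun n _ => ?_
  rw [zf_add, zf_add, zt_add, add_sub_add_comm, Matrix.mulVec_add, smul_add, herm_add_left,
    Matrix.mulVec_add, herm_add_left]
  ring

lemma Aform_smul_left (m N : ℕ) (h : ℝ)
    (B : ℤ → Matrix (Fin m ⊕ Fin m) (Fin m ⊕ Fin m) ℝ) (c : ℂ) (a w : V m) :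
    Aform m N h B (c • a) w = c * Aform m N h B a w := by
  unfold Aform
  rw [Finset.mul_sum]
  refine Finset.sum_congr rfl fun n _ => ?_
  rw [zf_smul, zf_smul, zt_smul, ← smul_sub]
  simp only [Matrix.mulVec_smul, smul_comm ((h : ℂ))⁻¹ c, herm_smul_left]
  ring

lemma Aform_zero_left (m N : ℕ) (h : ℝ)
    (B : ℤ → Matrix (Fin m ⊕ Fin m) (Fin m ⊕ Fin m) ℝ) (w : V m) :
    Aform m N h B (0 : V m) w = 0 := by
  unfold Aform
  refine Finset.sum_eq_zero fun n _ => ?_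
  rw [zf_zero, zf_zero, zt_zero]
  simp [herm_zero_left]

/-- The null space `{z̃ ∈ W̃_ω : 𝒜_{h,ω}(z̃, w̃) = 0 for all w̃ ∈ W̃_ω}`. -/
noncomputable def nullSp (m N : ℕ) (h : ℝ) (ω : ℂ)
    (B : ℤ → Matrix (Fin m ⊕ Fin m) (Fin m ⊕ Fin m) ℝ) : Submodule ℂ (V m) where
  carrier := {z | z ∈ Wt m N ω ∧ ∀ w ∈ Wt m N ω, Aform m N h B z w = 0}
  add_mem' := by
    intro a b ha hb
    exact ⟨(Wt m N ω).add_mem ha.1 hb.1, fun w hw => by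
      rw [Aform_add_left, ha.2 w hw, hb.2 w hw, add_zero]⟩
  zero_mem' := ⟨(Wt m N ω).zero_mem, fun w _ => Aform_zero_left m N h B w⟩
  smul_mem' := by
    intro c a ha
    exact ⟨(Wt m N ω).smul_mem c ha.1, fun w hw => by
      rw [Aform_smul_left, ha.2 w hw, mul_zero]⟩

/-- `m⁰_{h,ω}`: the dimension of the null space of `𝒜_{h,ω}`. -/
noncomputable def mZero (m N : ℕ) (h : ℝ) (ω : ℂ)
    (B : ℤ → Matrix (Fin m ⊕ Fin m) (Fin m ⊕ Fin m) ℝ) : ℕ :=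
  Module.finrank ℂ ↥(nullSp m N h ω B)

/-- `m⁺_{h,ω}`: the maximal dimension of a complex subspace of `W̃_ω` on which
`z̃ ↦ 𝒜_{h,ω}(z̃, z̃)` is positive definite. -/
noncomputable def mPlus (m N : ℕ) (h : ℝ) (ω : ℂ)
    (B : ℤ → Matrix (Fin m ⊕ Fin m) (Fin m ⊕ Fin m) ℝ) : ℕ :=
  sSup {d : ℕ | ∃ S : Submodule ℂ (V m), S ≤ Wt m N ω ∧ Module.finrank ℂ ↥S = d ∧
    ∀ z ∈ S, z ≠ 0 → 0 < (Aform m N h B z z).re}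

/-- `m⁻_{h,ω}`: the maximal dimension of a complex subspace of `W̃_ω` on which
`z̃ ↦ 𝒜_{h,ω}(z̃, z̃)` is negative definite. -/
noncomputable def mMinus (m N : ℕ) (h : ℝ) (ω : ℂ)
    (B : ℤ → Matrix (Fin m ⊕ Fin m) (Fin m ⊕ Fin m) ℝ) : ℕ :=
  sSup {d : ℕ | ∃ S : Submodule ℂ (V m), S ≤ Wt m N ω ∧ Module.finrank ℂ ↥S = d ∧
    ∀ z ∈ S, z ≠ 0 → (Aform m N h B z z).re < 0}


/-- The matrix `S_h(A,C,D)` with blocks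
`[[(I+hCᵀ)⁻¹, −h(I+hCᵀ)⁻¹D],[hA(I+hCᵀ)⁻¹, −h²A(I+hCᵀ)⁻¹D + I + hC]]`. -/
noncomputable def Sh (m : ℕ) (h : ℝ) (A C D : Matrix (Fin m) (Fin m) ℝ) :
    Matrix (Fin m ⊕ Fin m) (Fin m ⊕ Fin m) ℝ :=
  Matrix.fromBlocks (1 + h • Cᵀ)⁻¹ (-(h • ((1 + h • Cᵀ)⁻¹ * D)))
    (h • (A * (1 + h • Cᵀ)⁻¹)) (-((h ^ 2) • (A * (1 + h • Cᵀ)⁻¹ * D)) + 1 + h • C)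

/-- `mono S n = S_h(A_{n−1},C_{n−1},D_{n−1}) ⋯ S_h(A_0,C_0,D_0)`, the discrete
fundamental solution built from the blocks of the coefficient matrices `B_n`. -/
noncomputable def mono (m : ℕ) (h : ℝ)
    (B : ℤ → Matrix (Fin m ⊕ Fin m) (Fin m ⊕ Fin m) ℝ) :
    ℕ → Matrix (Fin m ⊕ Fin m) (Fin m ⊕ Fin m) ℝ
  | 0 => 1
  | n + 1 => Sh m h ((B (n : ℤ)).toBlocks₁₁) ((B (n : ℤ)).toBlocks₁₂)
      ((B (n : ℤ)).toBlocks₂₂) * mono m h B n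

-- AUX START


noncomputable def Cmap {I J : Type} (X : Matrix I J ℝ) : Matrix I J ℂ :=
  X.map (fun x => (x : ℂ))

lemma Cmap_mul {I J K : Type} [Fintype J] [DecidableEq J] (X : Matrix I J ℝ) (Y : Matrix J K ℝ) :
    Cmap (X * Y) = Cmap X * Cmap Y := by
  have : (fun x : ℝ => (x : ℂ)) = (Complex.ofRealHom : ℝ →+* ℂ) := by
    funext x; simp
  simp only [Cmap, this, Matrix.map_mul]

lemma Cmap_one {I : Type} [Fintype I] [DecidableEq I] : Cmap (1 : Matrix I I ℝ) = 1 := by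
  have : (fun x : ℝ => (x : ℂ)) = (Complex.ofRealHom : ℝ →+* ℂ) := by
    funext x; simp
  simp only [Cmap, this]
  exact Matrix.map_one _ (map_zero _) (map_one _)

lemma Cmap_add {I J : Type} (X Y : Matrix I J ℝ) : Cmap (X + Y) = Cmap X + Cmap Y := by
  ext i j; simp [Cmap]

lemma Cmap_smul {I J : Type} (c : ℝ) (X : Matrix I J ℝ) :
    Cmap (c • X) = (c : ℂ) • Cmap X := by
  ext i j; simp [Cmap]

lemma Cmap_neg {I J : Type} (X : Matrix I J ℝ) : Cmap (-X) = -Cmap X := by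
  ext i j; simp [Cmap]

lemma Cmap_fromBlocks {I J K L : Type} (A : Matrix I K ℝ) (B : Matrix I L ℝ)
    (C : Matrix J K ℝ) (D : Matrix J L ℝ) :
    Cmap (fromBlocks A B C D) = fromBlocks (Cmap A) (Cmap B) (Cmap C) (Cmap D) := by
  simp [Cmap, Matrix.fromBlocks_map]

lemma Cmap_isUnit {I : Type} [Fintype I] [DecidableEq I] {X : Matrix I I ℝ} (h : IsUnit X) :
    IsUnit (Cmap X) := by
  rcases h with ⟨u, rfl⟩
  exact ⟨⟨Cmap (u : Matrix I I ℝ), Cmap ((u⁻¹ : _) : Matrix I I ℝ),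
    by rw [← Cmap_mul, u.mul_inv, Cmap_one],
    by rw [← Cmap_mul, u.inv_mul, Cmap_one]⟩, rfl⟩

lemma Cmap_inv_mul {I : Type} [Fintype I] [DecidableEq I] {X : Matrix I I ℝ} (h : IsUnit X) :
    Cmap X⁻¹ * Cmap X = 1 := by
  rw [← Cmap_mul, Matrix.nonsing_inv_mul X ((Matrix.isUnit_iff_isUnit_det X).1 h), Cmap_one]

lemma Cmap_mul_inv {I : Type} [Fintype I] [DecidableEq I] {X : Matrix I I ℝ} (h : IsUnit X) :
    Cmap X * Cmap X⁻¹ = 1 := by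
  rw [← Cmap_mul, Matrix.mul_nonsing_inv X ((Matrix.isUnit_iff_isUnit_det X).1 h), Cmap_one]


lemma herm_sub_left {α : Type} [Fintype α] (u v w : α → ℂ) :
    herm (u - v) w = herm u w - herm v w := by
  simp [herm, sub_mul, Finset.sum_sub_distrib]

lemma elim_comp {m : ℕ} (f : Fin m ⊕ Fin m → ℂ) :
    Sum.elim (f ∘ Sum.inl) (f ∘ Sum.inr) = f := by
  funext i; cases i <;> rfl

/-- quasi-periodic extension from the window `[a, a+N)` -/
noncomputable def ext (m N : ℕ) (ω : ℂ) (a : ℤ) (f : ℤ → Fin m → ℂ) : ℤ → Fin m → ℂ :=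
  fun n => ω ^ ((n - a) / (N : ℤ)) • f (a + (n - a) % (N : ℤ))

lemma ext_period {m N : ℕ} (hN : 1 ≤ N) (ω : ℂ) (hω0 : ω ≠ 0) (a : ℤ) (f : ℤ → Fin m → ℂ)
    (n : ℤ) : ext m N ω a f (n + (N : ℤ)) = ω • ext m N ω a f n := by
  have hNz : (N : ℤ) ≠ 0 := by positivity
  have e1 : n + (N : ℤ) - a = (n - a) + (N : ℤ) * 1 := by ring
  unfold ext
  rw [e1, Int.add_mul_ediv_left _ _ hNz, Int.add_mul_emod_self_left,
    zpow_add₀ hω0, zpow_one, smul_smul, mul_comm]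

lemma ext_eq_of_mem {m N : ℕ} (ω : ℂ) (a : ℤ) (f : ℤ → Fin m → ℂ) (n : ℤ)
    (h1 : a ≤ n) (h2 : n < a + (N : ℤ)) : ext m N ω a f n = f n := by
  have h0 : 0 ≤ n - a := by omega
  have hlt : n - a < (N : ℤ) := by omega
  have e : a + (n - a) = n := by omega
  unfold ext
  rw [Int.ediv_eq_zero_of_lt h0 hlt, Int.emod_eq_of_lt h0 hlt, zpow_zero, one_smul, e]

lemma wt_prop {m N : ℕ} {ω : ℂ} (hω0 : ω ≠ 0) {z : V m} (hz : z ∈ Wt m N ω) (q : ℤ)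
    (n : ℤ) : z.1 (n + q * (N : ℤ)) = ω ^ q • z.1 n ∧ z.2 (n + q * (N : ℤ)) = ω ^ q • z.2 n := by
  induction q using Int.induction_on with
  | zero => simp
  | succ k ih =>
    have e : n + ((k : ℤ) + 1) * (N : ℤ) = (n + k * (N : ℤ)) + (N : ℤ) := by ring
    rw [e]
    obtain ⟨h1, h2⟩ := hz (n + k * (N : ℤ))
    rw [h1, h2, ih.1, ih.2, smul_smul, smul_smul, mul_comm ω, ← zpow_add_one₀ hω0]
    exact ⟨rfl, rfl⟩
  | pred k ih =>
    have e : (n + (-(k : ℤ) - 1) * (N : ℤ)) + (N : ℤ) = n + (-(k : ℤ)) * (N : ℤ) := by ring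
    obtain ⟨h1, h2⟩ := hz (n + (-(k : ℤ) - 1) * (N : ℤ))
    rw [e, ih.1] at h1
    rw [e, ih.2] at h2
    have sc : ω⁻¹ * ω ^ (-(k : ℤ)) = ω ^ (-(k : ℤ) - 1) := by
      rw [zpow_sub_one₀ hω0, mul_comm]
    constructor
    · have h3 := (inv_smul_eq_iff₀ hω0).2 h1
      rw [smul_smul, sc] at h3
      exact h3.symm
    · have h3 := (inv_smul_eq_iff₀ hω0).2 h2
      rw [smul_smul, sc] at h3
      exact h3.symm

/-- The Euler–Lagrange vector of the form at index `n`. -/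
noncomputable def EL (m : ℕ) (h : ℝ) (B : ℤ → Matrix (Fin m ⊕ Fin m) (Fin m ⊕ Fin m) ℝ)
    (z : V m) (n : ℤ) : Fin m ⊕ Fin m → ℂ :=
  ((h : ℂ))⁻¹ • ((-(Jm m)).mulVec (zf z (n + 1) - zf z n))
    - ((B n).map (fun x => (x : ℂ))).mulVec (zt z n)

lemma Aform_eq_sum_EL (m N : ℕ) (h : ℝ) (B : ℤ → Matrix (Fin m ⊕ Fin m) (Fin m ⊕ Fin m) ℝ)
    (z w : V m) :
    Aform m N h B z w = ∑ n ∈ Finset.Icc (1 : ℤ) (N : ℤ), herm (EL m h B z n) (zt w n) := by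
  refine Finset.sum_congr rfl fun n _ => ?_
  rw [EL, herm_sub_left]

lemma herm_zero_right {α : Type} [Fintype α] (u : α → ℂ) : herm u 0 = 0 := by
  simp [herm]

lemma elim_zero_zero {m : ℕ} : (Sum.elim (0 : Fin m → ℂ) (0 : Fin m → ℂ)) = 0 := by
  funext i; cases i <;> rfl

lemma herm_dL {m : ℕ} (u : Fin m ⊕ Fin m → ℂ) (j : Fin m) :
    herm u (Sum.elim (Pi.single j 1) 0) = u (Sum.inl j) := by
  simp [herm, Fintype.sum_sum_type, Pi.single_apply, apply_ite, mul_ite,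
    Finset.sum_ite_eq']

lemma herm_dR {m : ℕ} (u : Fin m ⊕ Fin m → ℂ) (j : Fin m) :
    herm u (Sum.elim (0 : Fin m → ℂ) (Pi.single j 1)) = u (Sum.inr j) := by
  simp [herm, Fintype.sum_sum_type, Pi.single_apply, apply_ite, mul_ite,
    Finset.sum_ite_eq']

lemma EL_vanish (m N : ℕ) (hN : 1 ≤ N) (h : ℝ) (ω : ℂ) (hω0 : ω ≠ 0)
    (B : ℤ → Matrix (Fin m ⊕ Fin m) (Fin m ⊕ Fin m) ℝ) (z : V m)
    (H : ∀ w ∈ Wt m N ω, Aform m N h B z w = 0) :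
    ∀ n ∈ Finset.Icc (1 : ℤ) (N : ℤ), EL m h B z n = 0 := by
  intro n₀ hn₀
  rw [Finset.mem_Icc] at hn₀
  funext i
  have hsum : ∀ (w : V m), w ∈ Wt m N ω →
      (∀ n, 1 ≤ n → n ≤ (N : ℤ) → n ≠ n₀ → zt w n = 0) →
      herm (EL m h B z n₀) (zt w n₀) = 0 := by
    intro w hw hvan
    have h0 := H w hw
    rw [Aform_eq_sum_EL] at h0
    rw [← h0]
    symm
    refine Finset.sum_eq_single_of_mem n₀ (Finset.mem_Icc.2 hn₀) ?_
    intro n hn hne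
    rw [Finset.mem_Icc] at hn
    rw [hvan n hn.1 hn.2 hne, herm_zero_right]
  cases i with
  | inl j =>
    set X : ℤ → Fin m → ℂ := fun k => if k = n₀ + 1 then Pi.single j 1 else 0 with hX
    set w : V m := (ext m N ω 2 X, fun _ => 0) with hw
    have hwW : w ∈ Wt m N ω := by
      intro n
      constructor
      · exact ext_period hN ω hω0 2 X n
      · show (0 : Fin m → ℂ) = ω • 0
        simp
    have hzt : ∀ n, 1 ≤ n → n ≤ (N : ℤ) → zt w n = Sum.elim (X (n + 1)) 0 := by
      intro n h1 h2
      show Sum.elim (ext m N ω 2 X (n + 1)) 0 = _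
      rw [ext_eq_of_mem ω 2 X (n + 1) (by omega) (by omega)]
    have key := hsum w hwW ?_
    · rw [hzt n₀ hn₀.1 hn₀.2] at key
      simp only [hX, if_pos rfl] at key
      rwa [herm_dL] at key
    · intro n h1 h2 hne
      rw [hzt n h1 h2]
      have : X (n + 1) = 0 := by
        simp only [hX]
        rw [if_neg (by omega)]
      rw [this, elim_zero_zero]
  | inr j =>
    set Y : ℤ → Fin m → ℂ := fun k => if k = n₀ then Pi.single j 1 else 0 with hY
    set w : V m := (fun _ => 0, ext m N ω 1 Y) with hw
    have hwW : w ∈ Wt m N ω := by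
      intro n
      constructor
      · show (0 : Fin m → ℂ) = ω • 0
        simp
      · exact ext_period hN ω hω0 1 Y n
    have hzt : ∀ n, 1 ≤ n → n ≤ (N : ℤ) → zt w n = Sum.elim (0 : Fin m → ℂ) (Y n) := by
      intro n h1 h2
      show Sum.elim (0 : Fin m → ℂ) (ext m N ω 1 Y n) = _
      rw [ext_eq_of_mem ω 1 Y n (by omega) (by omega)]
    have key := hsum w hwW ?_
    · rw [hzt n₀ hn₀.1 hn₀.2] at key
      simp only [hY, if_pos rfl] at key
      rwa [herm_dR] at key
    · intro n h1 h2 hne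
      rw [hzt n h1 h2]
      have : Y n = 0 := by
        simp only [hY]
        rw [if_neg (by omega)]
      rw [this, elim_zero_zero]

lemma Aform_zero_of_EL (m N : ℕ) (h : ℝ) (B : ℤ → Matrix (Fin m ⊕ Fin m) (Fin m ⊕ Fin m) ℝ)
    (z : V m) (hEL : ∀ n ∈ Finset.Icc (1 : ℤ) (N : ℤ), EL m h B z n = 0) (w : V m) :
    Aform m N h B z w = 0 := by
  rw [Aform_eq_sum_EL]
  refine Finset.sum_eq_zero fun n hn => ?_
  rw [hEL n hn, herm_zero_left]

lemma elim_eq_elim_iff {m : ℕ} (a b c d : Fin m → ℂ) :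
    Sum.elim a b = Sum.elim c d ↔ a = c ∧ b = d := by
  constructor
  · intro H
    constructor
    · funext i; exact congrFun H (Sum.inl i)
    · funext i; exact congrFun H (Sum.inr i)
  · rintro ⟨rfl, rfl⟩; rfl

lemma elim_eq_zero_iff {m : ℕ} (a b : Fin m → ℂ) :
    Sum.elim a b = 0 ↔ a = 0 ∧ b = 0 := by
  rw [← elim_zero_zero, elim_eq_elim_iff]

lemma elim_sub {m : ℕ} (a b c d : Fin m → ℂ) :
    Sum.elim a b - Sum.elim c d = Sum.elim (a - c) (b - d) := by
  funext i; cases i <;> rfl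

lemma elim_smul {m : ℕ} (c : ℂ) (a b : Fin m → ℂ) :
    c • Sum.elim a b = Sum.elim (c • a) (c • b) := by
  funext i; cases i <;> rfl

lemma csmul_eq_zero_iff {α : Type} {c : ℂ} (hc : c ≠ 0) (v : α → ℂ) :
    c • v = 0 ↔ v = 0 := by
  constructor
  · intro hv
    have := congrArg (fun u => c⁻¹ • u) hv
    simpa [smul_smul, inv_mul_cancel₀ hc] using this
  · intro hv; rw [hv, smul_zero]

lemma fromBlocks_of_symm {m : ℕ} (M : Matrix (Fin m ⊕ Fin m) (Fin m ⊕ Fin m) ℝ)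
    (hs : Mᵀ = M) :
    M = fromBlocks M.toBlocks₁₁ M.toBlocks₁₂ (M.toBlocks₁₂)ᵀ M.toBlocks₂₂ := by
  have h21 : M.toBlocks₂₁ = (M.toBlocks₁₂)ᵀ := by
    ext i j
    show M (Sum.inr i) (Sum.inl j) = M (Sum.inl j) (Sum.inr i)
    conv_lhs => rw [← hs]
    rfl
  rw [← h21, Matrix.fromBlocks_toBlocks]

lemma negJm (m : ℕ) : -(Jm m) = fromBlocks 0 1 (-1) 0 := by
  rw [Jm]
  simp [Matrix.fromBlocks_neg]

/-- one-step equivalence: the Euler–Lagrange equation at one step is equivalent to the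
discrete evolution by `S_h`. -/
lemma step_iff (m : ℕ) (h : ℝ) (hh : h ≠ 0) (A C D : Matrix (Fin m) (Fin m) ℝ)
    (hE : IsUnit ((1 : Matrix (Fin m) (Fin m) ℝ) + h • Cᵀ)) (x x' y y' : Fin m → ℂ) :
    ((h : ℂ))⁻¹ • ((-(Jm m)).mulVec (Sum.elim x' y' - Sum.elim x y))
      - (Cmap (fromBlocks A C Cᵀ D)).mulVec (Sum.elim x' y) = 0
    ↔ Sum.elim x' y' = (Cmap (Sh m h A C D)).mulVec (Sum.elim x y) := by
  have hc : ((h : ℂ)) ≠ 0 := by exact_mod_cast hh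
  set E : Matrix (Fin m) (Fin m) ℝ := 1 + h • Cᵀ with hEdef
  set Ac := Cmap A with hAc
  set Cc := Cmap C with hCc
  set Ctc := Cmap Cᵀ with hCtc
  set Dc := Cmap D with hDc
  set Ec := Cmap E with hEc
  set Gc := Cmap E⁻¹ with hGc
  have hEG : Ec * Gc = 1 := Cmap_mul_inv hE
  have hGE : Gc * Ec = 1 := Cmap_inv_mul hE
  have hEcblocks : Ec = 1 + (h : ℂ) • Ctc := by
    rw [hEc, hEdef, Cmap_add, Cmap_one, Cmap_smul, hCtc]
  set T : Matrix (Fin m ⊕ Fin m) (Fin m ⊕ Fin m) ℂ :=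
    fromBlocks Ec 0 (-((h : ℂ) • Ac)) 1 with hT
  set U : Matrix (Fin m ⊕ Fin m) (Fin m ⊕ Fin m) ℂ :=
    fromBlocks 1 (-((h : ℂ) • Dc)) 0 (1 + (h : ℂ) • Cc) with hU
  set Sc := Cmap (Sh m h A C D) with hSc
  have hScBlocks : Sc = fromBlocks Gc (-((h : ℂ) • (Gc * Dc)))
      ((h : ℂ) • (Ac * Gc)) (-(((h : ℂ)) ^ 2 • (Ac * Gc * Dc)) + 1 + (h : ℂ) • Cc) := by
    rw [hSc, Sh, Cmap_fromBlocks, ← hEdef]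
    simp only [Cmap_neg, Cmap_smul, Cmap_mul, Cmap_add, Cmap_one]
    norm_cast
  -- the key matrix identity T * Sc = U
  have hTS : T * Sc = U := by
    rw [hT, hScBlocks, hU, Matrix.fromBlocks_multiply]
    have b11 : Ec * Gc + 0 * ((h : ℂ) • (Ac * Gc)) = (1 : Matrix (Fin m) (Fin m) ℂ) := by
      rw [hEG, Matrix.zero_mul, add_zero]
    have b12 : Ec * -((h : ℂ) • (Gc * Dc))
        + 0 * (-(((h : ℂ)) ^ 2 • (Ac * Gc * Dc)) + 1 + (h : ℂ) • Cc)
        = -((h : ℂ) • Dc) := by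
      rw [Matrix.zero_mul, add_zero, Matrix.mul_neg, Matrix.mul_smul, ← Matrix.mul_assoc,
        hEG, Matrix.one_mul]
    have b21 : -((h : ℂ) • Ac) * Gc + 1 * ((h : ℂ) • (Ac * Gc)) = 0 := by
      rw [Matrix.one_mul, Matrix.neg_mul, Matrix.smul_mul]
      exact neg_add_cancel _
    have b22 : -((h : ℂ) • Ac) * -((h : ℂ) • (Gc * Dc))
        + 1 * (-(((h : ℂ)) ^ 2 • (Ac * Gc * Dc)) + 1 + (h : ℂ) • Cc)
        = 1 + (h : ℂ) • Cc := by
      rw [Matrix.one_mul, Matrix.neg_mul, Matrix.mul_neg, neg_neg, Matrix.smul_mul,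
        Matrix.mul_smul, smul_smul, Matrix.mul_assoc]
      have : (h : ℂ) * (h : ℂ) = ((h : ℂ)) ^ 2 := by ring
      rw [this]
      abel
    rw [b11, b12, b21, b22]
  have hdetT : IsUnit T.det := by
    rw [hT, Matrix.det_fromBlocks_zero₁₂, Matrix.det_one, mul_one]
    exact (Matrix.isUnit_iff_isUnit_det Ec).1 (Cmap_isUnit hE)
  -- reduce RHS to T-form
  have key : Sum.elim x' y' = Sc *ᵥ (Sum.elim x y)
      ↔ T *ᵥ (Sum.elim x' y') = U *ᵥ (Sum.elim x y) := by
    constructor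
    · intro H
      rw [H, Matrix.mulVec_mulVec, hTS]
    · intro H
      have H2 : (T⁻¹ * T) *ᵥ (Sum.elim x' y') = (T⁻¹ * U) *ᵥ (Sum.elim x y) := by
        rw [← Matrix.mulVec_mulVec, ← Matrix.mulVec_mulVec, H]
      rw [Matrix.nonsing_inv_mul T hdetT, Matrix.one_mulVec] at H2
      rw [H2, ← hTS, ← Matrix.mul_assoc, Matrix.nonsing_inv_mul T hdetT, Matrix.one_mul]
  rw [key]
  -- compute both sides componentwise
  set P1 : Fin m → ℂ := ((h : ℂ))⁻¹ • (y' - y) - (Ac *ᵥ x' + Cc *ᵥ y) with hP1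
  set P2 : Fin m → ℂ := ((h : ℂ))⁻¹ • (-(x' - x)) - (Ctc *ᵥ x' + Dc *ᵥ y) with hP2
  have lhs_eq : ((h : ℂ))⁻¹ • ((-(Jm m)).mulVec (Sum.elim x' y' - Sum.elim x y))
      - (Cmap (fromBlocks A C Cᵀ D)).mulVec (Sum.elim x' y) = Sum.elim P1 P2 := by
    rw [negJm, elim_sub, Matrix.fromBlocks_mulVec, Cmap_fromBlocks, Matrix.fromBlocks_mulVec]
    simp only [Sum.elim_comp_inl, Sum.elim_comp_inr, Matrix.zero_mulVec, Matrix.one_mulVec,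
      Matrix.neg_mulVec, zero_add, add_zero]
    rw [elim_smul, elim_sub]
  have T_eq : T *ᵥ (Sum.elim x' y') = Sum.elim (Ec *ᵥ x') (-((h : ℂ) • (Ac *ᵥ x')) + y') := by
    rw [hT, Matrix.fromBlocks_mulVec]
    simp only [Sum.elim_comp_inl, Sum.elim_comp_inr, Matrix.zero_mulVec, Matrix.one_mulVec,
      Matrix.neg_mulVec, add_zero, Matrix.smul_mulVec]
  have U_eq : U *ᵥ (Sum.elim x y) = Sum.elim (x + -((h : ℂ) • (Dc *ᵥ y)))
      ((1 + (h : ℂ) • Cc) *ᵥ y) := by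
    rw [hU, Matrix.fromBlocks_mulVec]
    simp only [Sum.elim_comp_inl, Sum.elim_comp_inr, Matrix.zero_mulVec, Matrix.one_mulVec,
      Matrix.neg_mulVec, zero_add, Matrix.smul_mulVec]
  rw [lhs_eq, T_eq, U_eq, elim_eq_zero_iff, elim_eq_elim_iff]
  -- now two componentwise equivalences
  have e2 : P2 = 0 ↔ Ec *ᵥ x' = x + -((h : ℂ) • (Dc *ᵥ y)) := by
    rw [← sub_eq_zero (a := Ec *ᵥ x'), ← csmul_eq_zero_iff (neg_ne_zero.2 hc) P2]
    constructor <;> intro H <;> rw [← H] <;>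
    · rw [hP2, hEcblocks, Matrix.add_mulVec, Matrix.one_mulVec, Matrix.smul_mulVec,
        smul_sub, smul_smul, neg_mul, mul_inv_cancel₀ hc, neg_smul, neg_smul, one_smul,
        neg_neg, smul_add]
      abel
  have e1 : P1 = 0 ↔ -((h : ℂ) • (Ac *ᵥ x')) + y' = (1 + (h : ℂ) • Cc) *ᵥ y := by
    rw [← sub_eq_zero (a := -((h : ℂ) • (Ac *ᵥ x')) + y'), ← csmul_eq_zero_iff hc P1]
    constructor <;> intro H <;> rw [← H] <;>
    · rw [hP1, Matrix.add_mulVec, Matrix.one_mulVec, Matrix.smul_mulVec,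
        smul_sub, smul_smul, mul_inv_cancel₀ hc, one_smul, smul_add]
      abel
  rw [e1, e2]
  tauto

/-- abbreviation for the complexified step matrix at integer index `n` -/
noncomputable def ScM (m : ℕ) (h : ℝ) (B : ℤ → Matrix (Fin m ⊕ Fin m) (Fin m ⊕ Fin m) ℝ)
    (n : ℤ) : Matrix (Fin m ⊕ Fin m) (Fin m ⊕ Fin m) ℂ :=
  Cmap (Sh m h ((B n).toBlocks₁₁) ((B n).toBlocks₁₂) ((B n).toBlocks₂₂))

lemma EL_iff_step' (m : ℕ) (h : ℝ) (hh : h ≠ 0)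
    (B : ℤ → Matrix (Fin m ⊕ Fin m) (Fin m ⊕ Fin m) ℝ)
    (hBsym : ∀ n : ℤ, (B n)ᵀ = B n)
    (hinv : ∀ n : ℤ, IsUnit (1 + h • ((B n).toBlocks₁₂)ᵀ))
    (z : V m) (n : ℤ) :
    EL m h B z n = 0 ↔ zf z (n + 1) = (ScM m h B n).mulVec (zf z n) := by
  have hB := fromBlocks_of_symm (B n) (hBsym n)
  have key := step_iff m h hh ((B n).toBlocks₁₁) ((B n).toBlocks₁₂) ((B n).toBlocks₂₂)
    (hinv n) (z.1 n) (z.1 (n + 1)) (z.2 n) (z.2 (n + 1))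
  have e : (B n).map (fun x => (x : ℂ)) =
      Cmap (fromBlocks ((B n).toBlocks₁₁) ((B n).toBlocks₁₂)
        (((B n).toBlocks₁₂)ᵀ) ((B n).toBlocks₂₂)) := by
    rw [← hB]; rfl
  rw [EL, e]
  exact key

lemma zf_wt {m N : ℕ} {ω : ℂ} (hω0 : ω ≠ 0) {z : V m} (hz : z ∈ Wt m N ω) (q n : ℤ) :
    zf z (n + q * (N : ℤ)) = ω ^ q • zf z n := by
  funext i
  cases i with
  | inl j => exact congrFun ((wt_prop hω0 hz q n).1) j
  | inr j => exact congrFun ((wt_prop hω0 hz q n).2) j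

lemma B_per_all {m N : ℕ} {B : ℤ → Matrix (Fin m ⊕ Fin m) (Fin m ⊕ Fin m) ℝ}
    (hBper : ∀ n : ℤ, B (n + (N : ℤ)) = B n) (q n : ℤ) : B (n + q * (N : ℤ)) = B n := by
  induction q using Int.induction_on with
  | zero => simp
  | succ k ih =>
    have e : n + ((k : ℤ) + 1) * (N : ℤ) = (n + k * (N : ℤ)) + (N : ℤ) := by ring
    rw [e, hBper, ih]
  | pred k ih =>
    have e : (n + (-(k : ℤ) - 1) * (N : ℤ)) + (N : ℤ) = n + (-(k : ℤ)) * (N : ℤ) := by ring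
    have h2 := hBper (n + (-(k : ℤ) - 1) * (N : ℤ))
    rw [e] at h2
    exact h2.symm.trans ih

/-- recursion on the whole window `[0, N)` for elements of the null space -/
lemma nullSp_rec (m N : ℕ) (hN : 1 ≤ N) (h : ℝ) (hh : h ≠ 0) (ω : ℂ) (hω0 : ω ≠ 0)
    (B : ℤ → Matrix (Fin m ⊕ Fin m) (Fin m ⊕ Fin m) ℝ)
    (hBsym : ∀ n : ℤ, (B n)ᵀ = B n) (hBper : ∀ n : ℤ, B (n + (N : ℤ)) = B n)
    (hinv : ∀ n : ℤ, IsUnit (1 + h • ((B n).toBlocks₁₂)ᵀ))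
    (z : V m) (hz : z ∈ nullSp m N h ω B) :
    ∀ k : ℤ, 0 ≤ k → k < (N : ℤ) → zf z (k + 1) = (ScM m h B k).mulVec (zf z k) := by
  have hzW : z ∈ Wt m N ω := hz.1
  have hEL := EL_vanish m N hN h ω hω0 B z hz.2
  intro k hk0 hkN
  rcases eq_or_lt_of_le hk0 with hk | hk
  · -- k = 0 : use the equation at n = N and quasi-periodicity
    subst hk
    have hN' : (N : ℤ) ∈ Finset.Icc (1 : ℤ) (N : ℤ) := by
      rw [Finset.mem_Icc]; omega
    have step := (EL_iff_step' m h hh B hBsym hinv z (N : ℤ)).1 (hEL _ hN')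
    have hB0 : B (N : ℤ) = B 0 := by simpa using hBper 0
    have hSc : ScM m h B (N : ℤ) = ScM m h B 0 := by rw [ScM, ScM, hB0]
    refine smul_right_injective (Fin m ⊕ Fin m → ℂ) hω0 ?_
    rw [zero_add]
    calc ω • zf z 1 = ω ^ (1 : ℤ) • zf z 1 := by rw [zpow_one]
      _ = zf z (1 + 1 * (N : ℤ)) := (zf_wt hω0 hzW 1 1).symm
      _ = ScM m h B (N : ℤ) *ᵥ zf z (0 + 1 * (N : ℤ)) := by
          rw [show (1 : ℤ) + 1 * (N : ℤ) = (N : ℤ) + 1 by ring,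
            show (0 : ℤ) + 1 * (N : ℤ) = (N : ℤ) by ring]
          exact step
      _ = ScM m h B 0 *ᵥ (ω ^ (1 : ℤ) • zf z 0) := by rw [hSc, zf_wt hω0 hzW 1 0]
      _ = ω • (ScM m h B 0 *ᵥ zf z 0) := by rw [zpow_one, Matrix.mulVec_smul]
  · -- 1 ≤ k ≤ N
    have hk' : k ∈ Finset.Icc (1 : ℤ) (N : ℤ) := by rw [Finset.mem_Icc]; omega
    exact (EL_iff_step' m h hh B hBsym hinv z k).1 (hEL _ hk')

lemma ScM_mono (m : ℕ) (h : ℝ) (B : ℤ → Matrix (Fin m ⊕ Fin m) (Fin m ⊕ Fin m) ℝ)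
    (k : ℕ) : Cmap (mono m h B (k + 1)) = ScM m h B (k : ℤ) * Cmap (mono m h B k) := by
  rw [mono, Cmap_mul, ScM]

/-- along the window, a null-space element evolves by `mono` -/
lemma nullSp_mono (m N : ℕ) (hN : 1 ≤ N) (h : ℝ) (hh : h ≠ 0) (ω : ℂ) (hω0 : ω ≠ 0)
    (B : ℤ → Matrix (Fin m ⊕ Fin m) (Fin m ⊕ Fin m) ℝ)
    (hBsym : ∀ n : ℤ, (B n)ᵀ = B n) (hBper : ∀ n : ℤ, B (n + (N : ℤ)) = B n)
    (hinv : ∀ n : ℤ, IsUnit (1 + h • ((B n).toBlocks₁₂)ᵀ))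
    (z : V m) (hz : z ∈ nullSp m N h ω B) :
    ∀ k : ℕ, k ≤ N → zf z (k : ℤ) = (Cmap (mono m h B k)).mulVec (zf z 0) := by
  intro k
  induction k with
  | zero => intro _; rw [mono, Cmap_one, Matrix.one_mulVec]; rfl
  | succ k ih =>
    intro hk
    have ihh := ih (by omega)
    have hrec := nullSp_rec m N hN h hh ω hω0 B hBsym hBper hinv z hz (k : ℤ)
      (by positivity) (by exact_mod_cast hk)
    have e : ((k + 1 : ℕ) : ℤ) = (k : ℤ) + 1 := by push_cast; ring
    rw [e, hrec, ihh, Matrix.mulVec_mulVec, ← ScM_mono]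

lemma nullSp_ker (m N : ℕ) (hN : 1 ≤ N) (h : ℝ) (hh : h ≠ 0) (ω : ℂ) (hω0 : ω ≠ 0)
    (B : ℤ → Matrix (Fin m ⊕ Fin m) (Fin m ⊕ Fin m) ℝ)
    (hBsym : ∀ n : ℤ, (B n)ᵀ = B n) (hBper : ∀ n : ℤ, B (n + (N : ℤ)) = B n)
    (hinv : ∀ n : ℤ, IsUnit (1 + h • ((B n).toBlocks₁₂)ᵀ))
    (z : V m) (hz : z ∈ nullSp m N h ω B) :
    (Cmap (mono m h B N) - ω • 1).mulVec (zf z 0) = 0 := by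
  have h1 := nullSp_mono m N hN h hh ω hω0 B hBsym hBper hinv z hz N le_rfl
  have h2 : zf z ((N : ℤ)) = ω • zf z 0 := by
    rw [show ((N : ℤ)) = 0 + 1 * (N : ℤ) by ring, zf_wt hω0 hz.1 1 0, zpow_one]
  rw [Matrix.sub_mulVec, Matrix.smul_mulVec, Matrix.one_mulVec, ← h1, h2, sub_self]

lemma zf_sub {m : ℕ} (a b : V m) (n : ℤ) : zf (a - b) n = zf a n - zf b n := by
  funext i; cases i <;> rfl

lemma nullSp_inj (m N : ℕ) (hN : 1 ≤ N) (h : ℝ) (hh : h ≠ 0) (ω : ℂ) (hω0 : ω ≠ 0)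
    (B : ℤ → Matrix (Fin m ⊕ Fin m) (Fin m ⊕ Fin m) ℝ)
    (hBsym : ∀ n : ℤ, (B n)ᵀ = B n) (hBper : ∀ n : ℤ, B (n + (N : ℤ)) = B n)
    (hinv : ∀ n : ℤ, IsUnit (1 + h • ((B n).toBlocks₁₂)ᵀ))
    (z : V m) (hz : z ∈ nullSp m N h ω B) (h0 : zf z 0 = 0) : z = 0 := by
  have hwin : ∀ k : ℕ, k ≤ N → zf z (k : ℤ) = 0 := by
    intro k hk
    rw [nullSp_mono m N hN h hh ω hω0 B hBsym hBper hinv z hz k hk, h0, Matrix.mulVec_zero]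
  have hall : ∀ n : ℤ, zf z n = 0 := by
    intro n
    have hNz : (N : ℤ) ≠ 0 := by positivity
    have hNpos : (0 : ℤ) < (N : ℤ) := by positivity
    set r := n % (N : ℤ) with hr
    set q := n / (N : ℤ) with hq
    have hr0 : 0 ≤ r := Int.emod_nonneg n hNz
    have hrN : r < (N : ℤ) := Int.emod_lt_of_pos n hNpos
    have hnn : (N : ℤ) * q + r = n := Int.mul_ediv_add_emod n (N : ℤ)
    have hrc : ((r.toNat : ℕ) : ℤ) = r := by omega
    have hz1 : zf z r = 0 := by
      rw [← hrc]
      exact hwin r.toNat (by omega)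
    rw [show n = r + q * (N : ℤ) by linarith, zf_wt hω0 hz.1 q r, hz1, smul_zero]
  have h1 : z.1 = 0 := by
    funext n j; exact congrFun (hall n) (Sum.inl j)
  have h2 : z.2 = 0 := by
    funext n j; exact congrFun (hall n) (Sum.inr j)
  exact Prod.ext h1 h2

/-- the candidate element of the null space built from a kernel vector of the monodromy -/
noncomputable def zOf (m N : ℕ) (h : ℝ) (ω : ℂ)
    (B : ℤ → Matrix (Fin m ⊕ Fin m) (Fin m ⊕ Fin m) ℝ) (v : Fin m ⊕ Fin m → ℂ) : V m :=
  (fun n j => (ω ^ (n / (N : ℤ)) •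
      (Cmap (mono m h B (n % (N : ℤ)).toNat)).mulVec v) (Sum.inl j),
   fun n j => (ω ^ (n / (N : ℤ)) •
      (Cmap (mono m h B (n % (N : ℤ)).toNat)).mulVec v) (Sum.inr j))

lemma zOf_zf (m N : ℕ) (h : ℝ) (ω : ℂ)
    (B : ℤ → Matrix (Fin m ⊕ Fin m) (Fin m ⊕ Fin m) ℝ) (v : Fin m ⊕ Fin m → ℂ) (n : ℤ) :
    zf (zOf m N h ω B v) n
      = ω ^ (n / (N : ℤ)) • (Cmap (mono m h B (n % (N : ℤ)).toNat)).mulVec v := by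
  funext i; cases i <;> rfl

lemma zOf_zf0 (m N : ℕ) (hN : 1 ≤ N) (h : ℝ) (ω : ℂ)
    (B : ℤ → Matrix (Fin m ⊕ Fin m) (Fin m ⊕ Fin m) ℝ) (v : Fin m ⊕ Fin m → ℂ) :
    zf (zOf m N h ω B v) 0 = v := by
  rw [zOf_zf, Int.zero_ediv, Int.zero_emod, zpow_zero, one_smul]
  show (Cmap (mono m h B 0)).mulVec v = v
  rw [mono, Cmap_one, Matrix.one_mulVec]

lemma zOf_mem (m N : ℕ) (hN : 1 ≤ N) (h : ℝ) (ω : ℂ) (hω0 : ω ≠ 0)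
    (B : ℤ → Matrix (Fin m ⊕ Fin m) (Fin m ⊕ Fin m) ℝ) (v : Fin m ⊕ Fin m → ℂ) :
    zOf m N h ω B v ∈ Wt m N ω := by
  have hNz : (N : ℤ) ≠ 0 := by positivity
  have hper : ∀ n : ℤ, zf (zOf m N h ω B v) (n + (N : ℤ)) = ω • zf (zOf m N h ω B v) n := by
    intro n
    rw [zOf_zf, zOf_zf]
    have e1 : n + (N : ℤ) = n + (N : ℤ) * 1 := by ring
    rw [e1, Int.add_mul_ediv_left _ _ hNz, Int.add_mul_emod_self_left,
      zpow_add₀ hω0, zpow_one, smul_smul, mul_comm, ← smul_smul]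
  intro n
  constructor
  · funext j
    have := congrFun (hper n) (Sum.inl j)
    simpa [zf] using this
  · funext j
    have := congrFun (hper n) (Sum.inr j)
    simpa [zf] using this

lemma zOf_rec (m N : ℕ) (hN : 1 ≤ N) (h : ℝ) (ω : ℂ) (hω0 : ω ≠ 0)
    (B : ℤ → Matrix (Fin m ⊕ Fin m) (Fin m ⊕ Fin m) ℝ)
    (hBper : ∀ n : ℤ, B (n + (N : ℤ)) = B n) (v : Fin m ⊕ Fin m → ℂ)
    (hMv : (Cmap (mono m h B N)).mulVec v = ω • v) (n : ℤ) :
    zf (zOf m N h ω B v) (n + 1) = (ScM m h B n).mulVec (zf (zOf m N h ω B v) n) := by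
  have hNz : (N : ℤ) ≠ 0 := by positivity
  have hNpos : (0 : ℤ) < (N : ℤ) := by positivity
  set r := n % (N : ℤ) with hr
  set q := n / (N : ℤ) with hq
  have hr0 : 0 ≤ r := Int.emod_nonneg n hNz
  have hrN : r < (N : ℤ) := Int.emod_lt_of_pos n hNpos
  have hnn : (N : ℤ) * q + r = n := Int.mul_ediv_add_emod n (N : ℤ)
  have hrc : ((r.toNat : ℕ) : ℤ) = r := by omega
  have hBn : B n = B r := by
    rw [show n = r + q * (N : ℤ) by linarith]
    exact B_per_all hBper q r
  have hScn : ScM m h B n = ScM m h B r := by rw [ScM, ScM, hBn]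
  by_cases hlt : r + 1 < (N : ℤ)
  · have hidx : n + 1 = (r + 1) + (N : ℤ) * q := by linarith
    have hmod : (n + 1) % (N : ℤ) = r + 1 := by
      rw [hidx, Int.add_mul_emod_self_left, Int.emod_eq_of_lt (by omega) hlt]
    have hdiv : (n + 1) / (N : ℤ) = q := by
      rw [hidx, Int.add_mul_ediv_left _ _ hNz, Int.ediv_eq_zero_of_lt (by omega) hlt, zero_add]
    have htn : (r + 1).toNat = r.toNat + 1 := by omega
    rw [zOf_zf, zOf_zf, hmod, hdiv, htn, ← hr, ← hq, Matrix.mulVec_smul]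
    congr 1
    rw [ScM_mono m h B r.toNat, hrc, ← Matrix.mulVec_mulVec, hScn]
  · have hidx : n + 1 = 0 + (N : ℤ) * (q + 1) := by rw [mul_add, mul_one]; linarith
    have hmod : (n + 1) % (N : ℤ) = 0 := by
      rw [hidx, Int.add_mul_emod_self_left, Int.zero_emod]
    have hdiv : (n + 1) / (N : ℤ) = q + 1 := by
      rw [hidx, Int.add_mul_ediv_left _ _ hNz, Int.zero_ediv, zero_add]
    have hmono : Cmap (mono m h B N) = ScM m h B r * Cmap (mono m h B r.toNat) := by
      have hNe : N = r.toNat + 1 := by omega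
      rw [hNe, ScM_mono m h B r.toNat, hrc]
    rw [zOf_zf, zOf_zf, hmod, hdiv, ← hr, ← hq]
    have lhs_eq : ω ^ (q + 1) • (Cmap (mono m h B (0 : ℤ).toNat)).mulVec v
        = ω ^ (q + 1) • v := by
      rw [Int.toNat_zero, mono, Cmap_one, Matrix.one_mulVec]
    rw [lhs_eq, Matrix.mulVec_smul, hScn, Matrix.mulVec_mulVec, ← hmono, hMv,
      smul_smul, ← zpow_add_one₀ hω0]
lemma zOf_nullSp (m N : ℕ) (hN : 1 ≤ N) (h : ℝ) (hh : h ≠ 0) (ω : ℂ) (hω0 : ω ≠ 0)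
    (B : ℤ → Matrix (Fin m ⊕ Fin m) (Fin m ⊕ Fin m) ℝ)
    (hBsym : ∀ n : ℤ, (B n)ᵀ = B n) (hBper : ∀ n : ℤ, B (n + (N : ℤ)) = B n)
    (hinv : ∀ n : ℤ, IsUnit (1 + h • ((B n).toBlocks₁₂)ᵀ))
    (v : Fin m ⊕ Fin m → ℂ) (hMv : (Cmap (mono m h B N)).mulVec v = ω • v) :
    zOf m N h ω B v ∈ nullSp m N h ω B := by
  refine ⟨zOf_mem m N hN h ω hω0 B v, fun w _ => ?_⟩
  refine Aform_zero_of_EL m N h B _ (fun n _ => ?_) w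
  exact (EL_iff_step' m h hh B hBsym hinv _ n).2
    (zOf_rec m N hN h ω hω0 B hBper v hMv n)

-- AUX MORE

/-- the nullity `m⁰_{h,ω}` of the form equals the `ω`-nullity of the
monodromy matrix `M = S_h(A_{N−1},C_{N−1},D_{N−1}) ⋯ S_h(A_0,C_0,D_0)`. -/
theorem stmt5 (m N : ℕ) (hm : 1 ≤ m) (hN : 1 ≤ N) (h : ℝ) (hh : 0 < h)
    (ω : ℂ) (hω : ‖ω‖ = 1)
    (B : ℤ → Matrix (Fin m ⊕ Fin m) (Fin m ⊕ Fin m) ℝ)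
    (hBsym : ∀ n : ℤ, (B n)ᵀ = B n) (hBper : ∀ n : ℤ, B (n + (N : ℤ)) = B n)
    (hinv : ∀ n : ℤ, IsUnit (1 + h • ((B n).toBlocks₁₂)ᵀ)) :
    mZero m N h ω B =
      Module.finrank ℂ ↥(LinearMap.ker
        (Matrix.mulVecLin ((mono m h B N).map (fun x => (x : ℂ)) - ω • 1))) := by
  have hh' : h ≠ 0 := hh.ne'
  have hω0 : ω ≠ 0 := by
    intro h0; rw [h0] at hω; simp at hω
  have hMc : (mono m h B N).map (fun x => (x : ℂ)) = Cmap (mono m h B N) := rfl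
  set K := LinearMap.ker
    (Matrix.mulVecLin ((mono m h B N).map (fun x => (x : ℂ)) - ω • 1)) with hK
  let L : ↥(nullSp m N h ω B) →ₗ[ℂ] ↥K :=
    { toFun := fun z => ⟨zf z.1 0, by
        rw [hK, LinearMap.mem_ker, Matrix.mulVecLin_apply, hMc]
        exact nullSp_ker m N hN h hh' ω hω0 B hBsym hBper hinv z.1 z.2⟩
      map_add' := fun a b => Subtype.ext (zf_add a.1 b.1 0)
      map_smul' := fun c a => Subtype.ext (zf_smul c a.1 0) }
  have hbij : Function.Bijective L := by
    constructor
    · intro a b hab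
      have hd : zf (a.1 - b.1) 0 = 0 := by
        rw [zf_sub, sub_eq_zero]
        exact congrArg Subtype.val hab
      have hz0 := nullSp_inj m N hN h hh' ω hω0 B hBsym hBper hinv (a.1 - b.1)
        ((nullSp m N h ω B).sub_mem a.2 b.2) hd
      exact Subtype.ext (by rwa [sub_eq_zero] at hz0)
    · rintro ⟨v, hv⟩
      have hv' : (Cmap (mono m h B N)).mulVec v = ω • v := by
        rw [hK, LinearMap.mem_ker, Matrix.mulVecLin_apply, hMc] at hv
        rwa [Matrix.sub_mulVec, Matrix.smul_mulVec, Matrix.one_mulVec,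
          sub_eq_zero] at hv
      refine ⟨⟨zOf m N h ω B v,
        zOf_nullSp m N hN h hh' ω hω0 B hBsym hBper hinv v hv'⟩, ?_⟩
      exact Subtype.ext (zOf_zf0 m N hN h ω B v)
  rw [mZero]
  exact LinearEquiv.finrank_eq (LinearEquiv.ofBijective L hbij)

end DHS
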